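/- arXiv:2509.25954 — 2 statements merged into one kernel-verified Lean document; each statement's English description precedes it below -/
import Mathlib

section
/- Let $l_1, l_2, l_3$ be nonnegative integers with pairwise distinct squares, and for $a \in \mathbb{C}$ define the Laurent polynomial $P_a(\zeta) = (\zeta^{l_1} + \zeta^{-l_1}) + a(\zeta^{l_2} + \zeta^{-l_2}) - (a+1)(\zeta^{l_3} + \zeta^{-l_3})$. Then $P_a$ has a zero of order at least $4$ at $\zeta = 1$ if and only if $a = \frac{l_1^2 - l_3^2}{l_3^2 - l_2^2}$; moreover, for this value of $a$ the fourth derivative of $P_a$ at $\zeta = 1$ is nonzero, so the zero has order exactly $4$. -/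
open Filter Finset

noncomputable def cFac (m : ℤ) (i : ℕ) : ℂ := ∏ j ∈ Finset.range i, ((m : ℂ) - j)

lemma cFac_zero (m : ℤ) : cFac m 0 = 1 := by simp [cFac]

lemma cFac_succ (m : ℤ) (i : ℕ) : cFac m (i + 1) = cFac m i * ((m : ℂ) - i) := by
  simp [cFac, Finset.prod_range_succ]

lemma iter_key (m1 m2 m3 : ℤ) (a : ℂ) (i : ℕ) :
    iteratedDeriv i (fun ζ : ℂ =>
        (ζ ^ m1 + ζ ^ (-m1)) + a * (ζ ^ m2 + ζ ^ (-m2))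
          - (a + 1) * (ζ ^ m3 + ζ ^ (-m3)))
      =ᶠ[nhds (1 : ℂ)] fun ζ =>
        (cFac m1 i * ζ ^ (m1 - i) + cFac (-m1) i * ζ ^ (-m1 - i))
          + a * (cFac m2 i * ζ ^ (m2 - i) + cFac (-m2) i * ζ ^ (-m2 - i))
          - (a + 1) * (cFac m3 i * ζ ^ (m3 - i) + cFac (-m3) i * ζ ^ (-m3 - i)) := by
  induction i with
  | zero =>
      simp only [iteratedDeriv_zero, cFac_zero, Nat.cast_zero, sub_zero, one_mul]
      exact EventuallyEq.refl _ _
  | succ i ih =>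
      rw [iteratedDeriv_succ]
      refine ih.deriv.trans ?_
      have h0 : ∀ᶠ ζ in nhds (1 : ℂ), ζ ≠ 0 := eventually_ne_nhds one_ne_zero
      filter_upwards [h0] with ζ hζ
      have hd : ∀ (C : ℂ) (e : ℤ), DifferentiableAt ℂ (fun ζ : ℂ => C * ζ ^ e) ζ :=
        fun C e => (differentiableAt_zpow.mpr (Or.inl hζ)).const_mul C
      have hD : ∀ (C : ℂ) (e : ℤ) (x : ℂ),
          deriv (fun ζ : ℂ => C * ζ ^ e) x = C * (e * x ^ (e - 1)) := by
        intro C e x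
        rw [deriv_const_mul_field, deriv_zpow]
      have key : ∀ (C : ℂ) (e : ℤ), C * ((e : ℂ) * ζ ^ (e - 1)) = (C * (e : ℂ)) * ζ ^ (e - 1) :=
        fun C e => by ring
      rw [deriv_fun_sub ((hd _ _).fun_add (hd _ _) |>.fun_add ((hd _ _).fun_add (hd _ _) |>.const_mul a))
            ((hd _ _).fun_add (hd _ _) |>.const_mul (a + 1)),
          deriv_fun_add ((hd _ _).fun_add (hd _ _)) ((hd _ _).fun_add (hd _ _) |>.const_mul a),
          deriv_const_mul_field, deriv_const_mul_field,
          deriv_fun_add (hd _ _) (hd _ _), deriv_fun_add (hd _ _) (hd _ _),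
          deriv_fun_add (hd _ _) (hd _ _)]
      simp only [hD, cFac_succ]
      push_cast
      have he : ∀ m : ℤ, m - (i : ℤ) - 1 = m - ((i : ℤ) + 1) := fun m => by ring
      have he' : ∀ m : ℤ, -m - (i : ℤ) - 1 = -m - ((i : ℤ) + 1) := fun m => by ring
      rw [he m1, he m2, he m3, he' m1, he' m2, he' m3]
      ring

lemma iter_val (m1 m2 m3 : ℤ) (a : ℂ) (i : ℕ) :
    iteratedDeriv i (fun ζ : ℂ =>
        (ζ ^ m1 + ζ ^ (-m1)) + a * (ζ ^ m2 + ζ ^ (-m2))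
          - (a + 1) * (ζ ^ m3 + ζ ^ (-m3))) 1
      = (cFac m1 i + cFac (-m1) i) + a * (cFac m2 i + cFac (-m2) i)
          - (a + 1) * (cFac m3 i + cFac (-m3) i) := by
  have := (iter_key m1 m2 m3 a i).eq_of_nhds
  simpa using this

theorem stmt_4 (l1 l2 l3 : ℕ)
    (h12 : l1 ^ 2 ≠ l2 ^ 2) (h13 : l1 ^ 2 ≠ l3 ^ 2) (h23 : l2 ^ 2 ≠ l3 ^ 2) :
    let P : ℂ → ℂ → ℂ := fun a ζ =>
      (ζ ^ (l1 : ℤ) + ζ ^ (-(l1 : ℤ))) + a * (ζ ^ (l2 : ℤ) + ζ ^ (-(l2 : ℤ)))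
        - (a + 1) * (ζ ^ (l3 : ℤ) + ζ ^ (-(l3 : ℤ)))
    (∀ a : ℂ, (∀ i < 4, iteratedDeriv i (P a) 1 = 0) ↔
        a = ((l1 : ℂ) ^ 2 - (l3 : ℂ) ^ 2) / ((l3 : ℂ) ^ 2 - (l2 : ℂ) ^ 2)) ∧
    iteratedDeriv 4 (P (((l1 : ℂ) ^ 2 - (l3 : ℂ) ^ 2) / ((l3 : ℂ) ^ 2 - (l2 : ℂ) ^ 2))) 1 ≠ 0 := by
  intro P
  -- sums of cFac pairs
  have hsum2 : ∀ l : ℕ, cFac (l : ℤ) 2 + cFac (-(l : ℤ)) 2 = 2 * (l : ℂ) ^ 2 := by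
    intro l
    simp [cFac_succ, cFac_zero]
    ring
  have hsum3 : ∀ l : ℕ, cFac (l : ℤ) 3 + cFac (-(l : ℤ)) 3 = -6 * (l : ℂ) ^ 2 := by
    intro l
    simp [cFac_succ, cFac_zero]
    ring
  have hsum4 : ∀ l : ℕ, cFac (l : ℤ) 4 + cFac (-(l : ℤ)) 4
      = 2 * (l : ℂ) ^ 4 + 22 * (l : ℂ) ^ 2 := by
    intro l
    simp [cFac_succ, cFac_zero]
    ring
  have hsum0 : ∀ l : ℕ, cFac (l : ℤ) 0 + cFac (-(l : ℤ)) 0 = 2 := by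
    intro l; simp [cFac_zero]; norm_num
  have hsum1 : ∀ l : ℕ, cFac (l : ℤ) 1 + cFac (-(l : ℤ)) 1 = 0 := by
    intro l
    simp [cFac_succ, cFac_zero]
  -- distinctness in ℂ
  have hcast : ∀ m n : ℕ, m ^ 2 ≠ n ^ 2 → (m : ℂ) ^ 2 ≠ (n : ℂ) ^ 2 := by
    intro m n h hc
    apply h
    have : ((m ^ 2 : ℕ) : ℂ) = ((n ^ 2 : ℕ) : ℂ) := by push_cast; exact hc
    exact_mod_cast this
  have h12' := hcast _ _ h12
  have h13' := hcast _ _ h13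
  have h23' := hcast _ _ h23
  have h32' : (l3 : ℂ) ^ 2 - (l2 : ℂ) ^ 2 ≠ 0 := sub_ne_zero.mpr (Ne.symm h23')
  set a0 : ℂ := ((l1 : ℂ) ^ 2 - (l3 : ℂ) ^ 2) / ((l3 : ℂ) ^ 2 - (l2 : ℂ) ^ 2) with ha0
  constructor
  · intro a
    constructor
    · intro h
      have h2 := h 2 (by norm_num)
      rw [show P a = (fun ζ : ℂ =>
        (ζ ^ (l1 : ℤ) + ζ ^ (-(l1 : ℤ))) + a * (ζ ^ (l2 : ℤ) + ζ ^ (-(l2 : ℤ)))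
          - (a + 1) * (ζ ^ (l3 : ℤ) + ζ ^ (-(l3 : ℤ)))) from rfl, iter_val] at h2
      rw [hsum2, hsum2, hsum2] at h2
      rw [ha0, eq_div_iff h32']
      linear_combination -h2 / 2
    · intro ha
      subst ha
      intro i hi
      rw [show P a0 = (fun ζ : ℂ =>
        (ζ ^ (l1 : ℤ) + ζ ^ (-(l1 : ℤ))) + a0 * (ζ ^ (l2 : ℤ) + ζ ^ (-(l2 : ℤ)))
          - (a0 + 1) * (ζ ^ (l3 : ℤ) + ζ ^ (-(l3 : ℤ)))) from rfl, iter_val]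
      have hkey : a0 * ((l3 : ℂ) ^ 2 - (l2 : ℂ) ^ 2) = (l1 : ℂ) ^ 2 - (l3 : ℂ) ^ 2 :=
        div_mul_cancel₀ _ h32'
      interval_cases i
      · rw [hsum0, hsum0, hsum0]; ring
      · rw [hsum1, hsum1, hsum1]; ring
      · rw [hsum2, hsum2, hsum2]
        linear_combination (-2 : ℂ) * hkey
      · rw [hsum3, hsum3, hsum3]
        linear_combination (6 : ℂ) * hkey
  · rw [show P a0 = (fun ζ : ℂ =>
        (ζ ^ (l1 : ℤ) + ζ ^ (-(l1 : ℤ))) + a0 * (ζ ^ (l2 : ℤ) + ζ ^ (-(l2 : ℤ)))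
          - (a0 + 1) * (ζ ^ (l3 : ℤ) + ζ ^ (-(l3 : ℤ)))) from rfl, iter_val,
        hsum4, hsum4, hsum4]
    intro h
    have hkey : a0 * ((l3 : ℂ) ^ 2 - (l2 : ℂ) ^ 2) = (l1 : ℂ) ^ 2 - (l3 : ℂ) ^ 2 :=
      div_mul_cancel₀ _ h32'
    have h12s : (l1 : ℂ) ^ 2 - (l2 : ℂ) ^ 2 ≠ 0 := sub_ne_zero.mpr h12'
    have h23s : (l2 : ℂ) ^ 2 - (l3 : ℂ) ^ 2 ≠ 0 := sub_ne_zero.mpr h23'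
    have h31s : (l3 : ℂ) ^ 2 - (l1 : ℂ) ^ 2 ≠ 0 := sub_ne_zero.mpr (Ne.symm h13')
    have : ((l1 : ℂ) ^ 2 - (l2 : ℂ) ^ 2) * (((l2 : ℂ) ^ 2 - (l3 : ℂ) ^ 2)
        * ((l3 : ℂ) ^ 2 - (l1 : ℂ) ^ 2)) = 0 := by
      linear_combination (((l3 : ℂ) ^ 2 - (l2 : ℂ) ^ 2) / 2) * h
        - ((l2 : ℂ) ^ 4 - (l3 : ℂ) ^ 4 + 11 * (l2 : ℂ) ^ 2 - 11 * (l3 : ℂ) ^ 2) * hkey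
    rcases mul_eq_zero.mp this with h' | h'
    · exact h12s h'
    · rcases mul_eq_zero.mp h' with h'' | h''
      · exact h23s h''
      · exact h31s h''
end

section
/- Define $S(a,b,c) = 1196694415125 a^3 - 819233068500 a^2 b - 18637542000 a b^2 - 30184000 b^3 - 20559305385 a^2 c + 1081838520 a b c + 4504080 b^2 c + 16833519 a c^2 - 137844 b c^2 - 595 c^3$, a homogeneous cubic polynomial over $\mathbb{Q}$. Then the projective plane curve $S = 0$ is smooth; that is, there is no $(a,b,c) \in \mathbb{C}^3 \setminus \{(0,0,0)\}$ at which $S$ and all three partial derivatives $\partial S/\partial a$, $\partial S/\partial b$, $\partial S/\partial c$ vanish simultaneously. -/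
noncomputable def ScubicC (a b c : ℂ) : ℂ :=
  1196694415125 * a ^ 3 - 819233068500 * a ^ 2 * b - 18637542000 * a * b ^ 2
    - 30184000 * b ^ 3 - 20559305385 * a ^ 2 * c + 1081838520 * a * b * c
    + 4504080 * b ^ 2 * c + 16833519 * a * c ^ 2 - 137844 * b * c ^ 2 - 595 * c ^ 3

private lemma deriv_cubic (p q r s x : ℂ) :
    deriv (fun t => p * t ^ 3 + q * t ^ 2 + r * t + s) x
      = 3 * p * x ^ 2 + 2 * q * x + r := by
  have h' := ((hasDerivAt_pow 3 x).const_mul p).add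
      (((hasDerivAt_pow 2 x).const_mul q).add
        (((hasDerivAt_id x).const_mul r).add (hasDerivAt_const x s)))
  have hfun : (fun t : ℂ => p * t ^ 3 + q * t ^ 2 + r * t + s)
      = fun y : ℂ => p * y ^ 3 + (q * y ^ 2 + (r * id y + s)) := by
    funext t; simp only [id]; ring
  rw [hfun, show (fun y : ℂ => p * y ^ 3 + (q * y ^ 2 + (r * id y + s))) = ((fun y => p * y ^ 3) + ((fun y => q * y ^ 2) + ((fun y => r * id y) + fun _ => s))) from rfl, h'.deriv]; push_cast; ring

theorem stmt_15 :
    ¬ ∃ a b c : ℂ, (a, b, c) ≠ (0, 0, 0) ∧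
      ScubicC a b c = 0 ∧
      deriv (fun x => ScubicC x b c) a = 0 ∧
      deriv (fun x => ScubicC a x c) b = 0 ∧
      deriv (fun x => ScubicC a b x) c = 0 := by
  rintro ⟨a, b, c, hne, -, hda, hdb, hdc⟩
  have ea : (fun x => ScubicC x b c)
      = fun t => (1196694415125 : ℂ) * t ^ 3 + (-819233068500 * b - 20559305385 * c) * t ^ 2
        + (-18637542000 * b ^ 2 + 1081838520 * b * c + 16833519 * c ^ 2) * t
        + (-30184000 * b ^ 3 + 4504080 * b ^ 2 * c - 137844 * b * c ^ 2 - 595 * c ^ 3) := by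
    funext t; simp only [ScubicC]; ring
  have eb : (fun x => ScubicC a x c)
      = fun t => (-30184000 : ℂ) * t ^ 3 + (-18637542000 * a + 4504080 * c) * t ^ 2
        + (-819233068500 * a ^ 2 + 1081838520 * a * c - 137844 * c ^ 2) * t
        + (1196694415125 * a ^ 3 - 20559305385 * a ^ 2 * c + 16833519 * a * c ^ 2 - 595 * c ^ 3) := by
    funext t; simp only [ScubicC]; ring
  have ec : (fun x => ScubicC a b x)
      = fun t => (-595 : ℂ) * t ^ 3 + (16833519 * a - 137844 * b) * t ^ 2
        + (-20559305385 * a ^ 2 + 1081838520 * a * b + 4504080 * b ^ 2) * t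
        + (1196694415125 * a ^ 3 - 819233068500 * a ^ 2 * b - 18637542000 * a * b ^ 2
            - 30184000 * b ^ 3) := by
    funext t; simp only [ScubicC]; ring
  rw [ea, deriv_cubic] at hda
  rw [eb, deriv_cubic] at hdb
  rw [ec, deriv_cubic] at hdc
  have ha : (3590083245375 : ℂ) * a ^ 2 - 1638466137000 * a * b - 18637542000 * b ^ 2
      - 41118610770 * a * c + 1081838520 * b * c + 16833519 * c ^ 2 = 0 := by
    linear_combination hda
  have hb : (-819233068500 : ℂ) * a ^ 2 - 37275084000 * a * b - 90552000 * b ^ 2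
      + 1081838520 * a * c + 9008160 * b * c - 137844 * c ^ 2 = 0 := by
    linear_combination hdb
  have hc : (-20559305385 : ℂ) * a ^ 2 + 1081838520 * a * b + 4504080 * b ^ 2
      + 33667038 * a * c - 275688 * b * c - 1785 * c ^ 2 = 0 := by
    linear_combination hdc
  have ha4 : a^4 = 0 := by linear_combination (((89598737483077517974671033463 : ℂ)/1590737461400783983755999918346446394043136000000)*c^2 + ((-100420485673389619002230990083 : ℂ)/34087231315731085366199998250280994158067200000)*b*c + ((1159697717725487230791406813 : ℂ)/44269131578871539436623374351014278127360000)*b^2 + ((-8800177404409902647047335880909 : ℂ)/18714558369420988044188234333487604635801600000)*a*c + ((6712483535899484977714785737 : ℂ)/552377755886097640029168663916399192320000)*a*b + ((1 : ℂ)/3590083245375)*a^2)*ha + (((160114192792386701147846961473 : ℂ)/25192674728066714674868776987387160086656000000)*c^2 + ((286661876734203842935005027137 : ℂ)/719790706516191847853393628211061716761600000)*b*c + ((-6413130023225374133100849553 : ℂ)/934793125345703698510900815858521710080000)*b^2 + ((-610025557648461749455021392407 : ℂ)/47567868041375060388278010288457963852800000)*a*c + ((-62250542283698801271367123297 : ℂ)/123552904003571585424098728021968737280000)*a*b)*hb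 + (((16792060381565111601759398777 : ℂ)/415879074876021956537516318521946769684480000)*c^2 + ((388327262429603586871780441 : ℂ)/270051347322092179569815791248017382912000)*b*c + ((-211337504371619630090603 : ℂ)/7157470111902787690692175755314534400)*b^2 + ((-703909483662419085830123801 : ℂ)/5491240177936514907737721245420832768000)*a*c)*hc
  have hb4 : b^4 = 0 := by linear_combination (((442899373213826215310898899 : ℂ)/5666334767082041200798928934447792000000)*c^2 + ((-21478156180970863141970737 : ℂ)/12142145929461516858854847716673840000)*b*c + ((-77658918030619486777571 : ℂ)/1962208456603347908670789870180000)*b^2 + ((-16672726006753586232430977577 : ℂ)/66662761965671072950575634522915200000)*a*c + ((-1448051116314803196815316389 : ℂ)/36627891189929160961854744243360000)*a*b)*ha + (((6469832135203116634743862651 : ℂ)/583299167199621888317536802075508000000)*c^2 + ((8903503724577731838643812653 : ℂ)/6060251087788279359143239502083200000)*b*c + ((259625835762142894216779413 : ℂ)/4578486398741145120231843030420000)*b^2 + ((13657934751754983265821293239 : ℂ)/1440244857283017008191448894013600000)*a*c + ((-243731376013382716295647313 : ℂ)/1406832583426634440235847515520000)*a*b)*hb + (((-9649935044391596761041719 :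 ℂ)/80803347837177058121909860027776000)*c^2 + ((-24075214677328006594586719 : ℂ)/2885833851327752075782495000992000)*b*c + ((19388081784277857256051 : ℂ)/16179826481990087888441887200)*b^2 + ((-252314901243729586013517953 : ℂ)/598543317312422652754887852057600)*a*c)*hc
  have hc4 : c^4 = 0 := by linear_combination (((1709955643098252735785072189 : ℂ)/26838219789674763498480811551768576)*c^2 + ((-1798231795652716379862535775 : ℂ)/4443990939199392657215978536169472)*b*c + ((52705289564044633517505875 : ℂ)/24417532632963695918769112836096)*b^2 + ((-2276395819049314665429047068315 : ℂ)/26838219789674763498480811551768576)*a*c + ((-99164874445619497510601375 : ℂ)/43525013605995892903331751936)*a*b)*ha + (((-16254864915273080803377051715 : ℂ)/8539433569441970204062076402835456)*c^2 + ((43262932290109498377921590555 : ℂ)/13419109894837381749240405775884288)*b*c + ((277504785393417267257014625 : ℂ)/87050027211991785806663503872)*b^2 + ((373362125872970537644230405325 : ℂ)/105425105795579879062494770405376)*a*c + ((-2384445354420836573805125 : ℂ)/238820376438934940484673536)*a*b)*hb + (((1678496473507219039051615482785 : ℂ)/8946073263224921166160270517256192)*c^2 + ((-117175976176432605615915530875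 : ℂ)/29045692413067925864156722458624)*b*c + ((1059430693457861243365065625 : ℂ)/14508337868665297634443917312)*b^2 + ((-4696842669305614697946103453375 : ℂ)/30121458798737108303569934401536)*a*c)*hc

  have ha0 : a = 0 := by
    have := pow_eq_zero_iff (n := 4) (by norm_num) |>.mp ha4; exact this
  have hb0 : b = 0 := by
    have := pow_eq_zero_iff (n := 4) (by norm_num) |>.mp hb4; exact this
  have hc0 : c = 0 := by
    have := pow_eq_zero_iff (n := 4) (by norm_num) |>.mp hc4; exact this
  exact hne (by simp [ha0, hb0, hc0])
end
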